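/- For r, s ∈ [0,1], the measure μ_s is the continuous image of μ_r (i.e., there exists a continuous map f : Ω → Ω with μ_s = μ_r ∘ f⁻¹, the pushforward of μ_r under f) if and only if s is binomially reducible to r. -/

import Mathlib

open MeasureTheory Polynomial

/-- `P` is a partition polynomial: `P(X) = ∑_{i=0}^n a_i X^i (1-X)^(n-i)` with
integers `0 ≤ a_i ≤ C(n,i)`. -/
def IsPartitionPolynomial (P : Polynomial ℤ) : Prop :=
  ∃ (n : ℕ) (a : ℕ → ℤ),
    (∀ i ≤ n, 0 ≤ a i ∧ a i ≤ (n.choose i : ℤ)) ∧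
    P = ∑ i ∈ Finset.range (n + 1), C (a i) * X ^ i * (1 - X) ^ (n - i)

/-- `μ` is the Bernoulli(`r`) product measure on the Cantor set `ℕ → Bool`:
every cylinder specifying the coordinates in a finite set `s` to agree with `e`
has measure `r^(#1s) * (1-r)^(#0s)`.  (This characterizes the infinite power of
the `(r, 1-r)` measure on `{0,1}` uniquely among Borel measures.) -/
def IsBernoulli (r : ℝ) (μ : Measure (ℕ → Bool)) : Prop :=
  ∀ (s : Finset ℕ) (e : ℕ → Bool),
    μ {x : ℕ → Bool | ∀ i ∈ s, x i = e i} =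
      ENNReal.ofReal (r ^ (s.filter fun i => e i = true).card *
        (1 - r) ^ (s.filter fun i => e i = false).card)

namespace CIBR


abbrev Ω := ℕ → Bool

def cyl (t : Finset ℕ) (e : ℕ → Bool) : Set Ω := {x | ∀ i ∈ t, x i = e i}

noncomputable def w (r : ℝ) (t : Finset ℕ) (e : ℕ → Bool) : ℝ :=
  r ^ (t.filter fun i => e i = true).card * (1 - r) ^ (t.filter fun i => e i = false).card

lemma measurableSet_cyl (t : Finset ℕ) (e : ℕ → Bool) : MeasurableSet (cyl t e) := by
  have : cyl t e = ⋂ i ∈ t, (fun x : Ω => x i) ⁻¹' {e i} := by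
    ext x; simp [cyl]
  rw [this]
  exact MeasurableSet.biInter t.countable_toSet fun i _ =>
    (measurable_pi_apply i) (by trivial)

lemma w_nonneg {r : ℝ} (hr : r ∈ Set.Icc (0:ℝ) 1) (t : Finset ℕ) (e : ℕ → Bool) :
    0 ≤ w r t e :=
  mul_nonneg (pow_nonneg hr.1 _) (pow_nonneg (by linarith [hr.2]) _)

lemma w_le_one {r : ℝ} (hr : r ∈ Set.Icc (0:ℝ) 1) (t : Finset ℕ) (e : ℕ → Bool) :
    w r t e ≤ 1 :=
  mul_le_one₀ (pow_le_one₀ hr.1 hr.2) (pow_nonneg (by linarith [hr.2]) _)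
    (pow_le_one₀ (by linarith [hr.2]) (by linarith [hr.1]))

lemma w_union {r : ℝ} {t u : Finset ℕ} (h : Disjoint t u) (e : ℕ → Bool) :
    w r (t ∪ u) e = w r t e * w r u e := by
  unfold w
  rw [Finset.filter_union, Finset.filter_union,
    Finset.card_union_of_disjoint (Finset.disjoint_filter_filter h),
    Finset.card_union_of_disjoint (Finset.disjoint_filter_filter h),
    pow_add, pow_add]
  ring

lemma cyl_eq {r : ℝ} {μ : Measure Ω} (h : IsBernoulli r μ)
    (t : Finset ℕ) (e : ℕ → Bool) : μ (cyl t e) = ENNReal.ofReal (w r t e) := h t e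

lemma isProb {r : ℝ} {μ : Measure Ω} (h : IsBernoulli r μ) :
    IsProbabilityMeasure μ := by
  constructor
  have := h ∅ (fun _ => true)
  simpa [cyl] using this





def cylSystem : Set (Set Ω) := {S | ∃ t e, S = cyl t e}

lemma isPiSystem_cylSystem : IsPiSystem cylSystem := by
  rintro S ⟨t, e, rfl⟩ T ⟨u, f, rfl⟩ hne
  obtain ⟨z, hz⟩ := hne
  refine ⟨t ∪ u, z, ?_⟩
  ext x
  simp only [cyl, Set.mem_inter_iff, Set.mem_setOf_eq, Finset.mem_union]
  constructor
  · rintro ⟨h1, h2⟩ i (hi | hi)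
    · rw [h1 i hi, ← hz.1 i hi]
    · rw [h2 i hi, ← hz.2 i hi]
  · intro h
    exact ⟨fun i hi => (h i (Or.inl hi)).trans (hz.1 i hi),
           fun i hi => (h i (Or.inr hi)).trans (hz.2 i hi)⟩

lemma generateFrom_cylSystem :
    (MeasurableSpace.pi : MeasurableSpace Ω) = .generateFrom cylSystem := by
  apply le_antisymm
  · rw [MeasurableSpace.pi]
    refine iSup_le fun i => ?_
    rw [← measurable_iff_comap_le]
    refine @measurable_to_countable Bool Ω ⊤ _ (.generateFrom cylSystem) (f := fun b => b i) fun y => ?_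
    apply MeasurableSpace.measurableSet_generateFrom
    refine ⟨{i}, fun _ => y i, ?_⟩
    ext x; simp [cyl]
  · refine MeasurableSpace.generateFrom_le ?_
    rintro S ⟨t, e, rfl⟩
    have : cyl t e = ⋂ i ∈ t, (fun x : Ω => x i) ⁻¹' {e i} := by ext x; simp [cyl]
    rw [this]
    exact MeasurableSet.biInter t.countable_toSet fun i _ =>
      (measurable_pi_apply i) (by trivial)

lemma unique {μ ν : Measure Ω} [IsFiniteMeasure μ]
    (h : ∀ t e, μ (cyl t e) = ν (cyl t e)) (huniv : μ Set.univ = ν Set.univ) : μ = ν := by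
  refine ext_of_generate_finite cylSystem generateFrom_cylSystem isPiSystem_cylSystem ?_ huniv
  rintro S ⟨t, e, rfl⟩
  exact h t e




lemma isOpen_nbhd (m : ℕ) (x : ℕ → Bool) : IsOpen {y : Ω | ∀ i < m, y i = x i} := by
  have : {y : Ω | ∀ i < m, y i = x i} = ⋂ i ∈ Finset.range m, (fun y : Ω => y i) ⁻¹' {x i} := by
    ext y; simp
  rw [this]
  exact isOpen_biInter_finset fun i _ => (continuous_apply i).isOpen_preimage _ (isOpen_discrete _)

lemma exists_determined {V : Set Ω} (hV : IsClopen V) :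
    ∃ n : ℕ, ∀ x y : Ω, (∀ i < n, x i = y i) → x ∈ V → y ∈ V := by
  have key : ∀ x : Ω, x ∈ V → ∃ n : ℕ, {y : Ω | ∀ i < n, y i = x i} ⊆ V := by
    intro x hx
    obtain ⟨I, u, hu, hsub⟩ := isOpen_pi_iff.mp hV.2 x hx
    refine ⟨I.sup id + 1, fun y hy => hsub ?_⟩
    intro i hi
    have : y i = x i := hy i (Nat.lt_succ_of_le (Finset.le_sup (f := id) hi))
    rw [this]; exact (hu i hi).2
  classical
  set m : ∀ x : V, ℕ := fun x => (key x.1 x.2).choose with hm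
  have hcov : V ⊆ ⋃ x : V, {y : Ω | ∀ i < m x, y i = x.1 i} := by
    intro x hx
    exact Set.mem_iUnion.mpr ⟨⟨x, hx⟩, fun i _ => rfl⟩
  obtain ⟨t, ht⟩ := (hV.1.isCompact).elim_finite_subcover
    (fun x : V => {y : Ω | ∀ i < m x, y i = x.1 i}) (fun x => isOpen_nbhd _ _) hcov
  refine ⟨t.sup m, fun x y hxy hx => ?_⟩
  obtain ⟨z, hz, hxz⟩ := Set.mem_iUnion₂.mp (ht hx)
  have : y ∈ {y : Ω | ∀ i < m z, y i = z.1 i} := by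
    intro i hi
    rw [← hxy i (lt_of_lt_of_le hi (Finset.le_sup hz)), hxz i hi]
  exact (key z.1 z.2).choose_spec this



def ones {n : ℕ} (p : Fin n → Bool) : ℕ := (Finset.univ.filter fun j => p j = true).card

def ext (n : ℕ) (p : Fin n → Bool) : ℕ → Bool := fun i => if h : i < n then p ⟨i, h⟩ else false

lemma ones_le {n : ℕ} (p : Fin n → Bool) : ones p ≤ n := by
  simpa [ones] using (Finset.card_filter_le Finset.univ fun j => p j = true)

lemma card_ones_eq (n i : ℕ) :
    (Finset.univ.filter fun p : Fin n → Bool => ones p = i).card = n.choose i := by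
  classical
  have h := Finset.card_powersetCard i (Finset.univ : Finset (Fin n))
  rw [Finset.card_univ, Fintype.card_fin] at h
  rw [← h]
  refine Finset.card_nbij (fun p => Finset.univ.filter fun j => p j = true) ?_ ?_ ?_
  · intro p hp
    simp only [Finset.mem_coe, Finset.mem_filter, Finset.mem_univ, true_and] at hp
    simp only [Finset.mem_coe, Finset.mem_powersetCard]
    exact ⟨Finset.subset_univ _, hp⟩
  · intro p hp q hq hpq
    funext j
    have := Finset.ext_iff.mp hpq j
    simp only [Finset.mem_filter, Finset.mem_univ, true_and] at this
    cases hj : p j <;> cases hk : q j <;> simp_all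
  · intro S hS
    simp only [Finset.mem_coe, Finset.mem_powersetCard] at hS
    have hfil : (Finset.univ.filter fun j => decide (j ∈ S) = true) = S := by
      ext j; simp
    refine ⟨fun j => decide (j ∈ S), ?_, ?_⟩
    · rw [Finset.mem_coe, Finset.mem_filter]
      exact ⟨Finset.mem_univ _, by unfold ones; rw [← hS.2]; congr 1⟩
    · exact hfil

lemma filter_false_card (t : Finset ℕ) (e : ℕ → Bool) :
    (t.filter fun i => e i = false).card = t.card - (t.filter fun i => e i = true).card := by
  classical
  have h := Finset.card_filter_add_card_filter_not (s := t) (p := fun i => e i = true)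
  have h2 : (t.filter fun i => ¬ e i = true) = t.filter fun i => e i = false := by
    apply Finset.filter_congr; intro i _; simp
  rw [h2] at h
  omega

lemma filter_ext_true (n : ℕ) (p : Fin n → Bool) :
    ((Finset.range n).filter fun i => ext n p i = true) =
      (Finset.univ.filter fun j : Fin n => p j = true).image Fin.val := by
  ext i
  simp only [Finset.mem_filter, Finset.mem_range, Finset.mem_image, Finset.mem_univ, true_and]
  constructor
  · rintro ⟨hi, he⟩
    exact ⟨⟨i, hi⟩, by simpa [ext, hi] using he, rfl⟩
  · rintro ⟨j, hj, rfl⟩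
    exact ⟨j.2, by simpa [ext, j.2] using hj⟩

lemma w_ext (r : ℝ) (n : ℕ) (p : Fin n → Bool) :
    r ^ (((Finset.range n).filter fun i => ext n p i = true).card) *
      (1 - r) ^ (((Finset.range n).filter fun i => ext n p i = false).card) =
    r ^ ones p * (1 - r) ^ (n - ones p) := by
  have h1 : (((Finset.range n).filter fun i => ext n p i = true)).card = ones p := by
    rw [filter_ext_true, Finset.card_image_of_injective _ Fin.val_injective]; rfl
  rw [filter_false_card, h1, Finset.card_range]



lemma measure_determined {r : ℝ} (hr : r ∈ Set.Icc (0:ℝ) 1) {μ : Measure Ω}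
    (hμ : IsBernoulli r μ) {V : Set Ω} (hm : MeasurableSet V) {n : ℕ}
    (hd : ∀ x y : Ω, (∀ i < n, x i = y i) → x ∈ V → y ∈ V) :
    ∃ a : ℕ → ℕ, (∀ i, a i ≤ n.choose i) ∧
      μ V = ENNReal.ofReal (∑ i ∈ Finset.range (n+1), (a i : ℝ) * (r ^ i * (1-r) ^ (n-i))) := by
  classical
  set A : Finset (Fin n → Bool) := Finset.univ.filter fun p => ext n p ∈ V with hA
  have hagree : ∀ (p : Fin n → Bool) (i : ℕ) (hi : i < n), ext n p i = p ⟨i, hi⟩ := by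
    intro p i hi; simp [ext, hi]
  have hdecomp : V = ⋃ p ∈ A, cyl (Finset.range n) (ext n p) := by
    ext x
    simp only [Set.mem_iUnion, hA, Finset.mem_filter, Finset.mem_univ, true_and]
    constructor
    · intro hx
      refine ⟨fun j => x j.1, ⟨?_, ?_⟩⟩
      · exact hd x _ (fun i hi => (hagree (fun j => x j.1) i hi).symm) hx
      · intro i hi
        rw [Finset.mem_range] at hi
        exact (hagree (fun j => x j.1) i hi).symm
    · rintro ⟨p, hp, hx⟩
      exact hd (ext n p) x (fun i hi => (hx i (Finset.mem_range.mpr hi)).symm) hp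
  have hdisj : (A : Set (Fin n → Bool)).PairwiseDisjoint
      fun p => cyl (Finset.range n) (ext n p) := by
    intro p _ q _ hpq
    refine Set.disjoint_left.mpr fun x hxp hxq => hpq ?_
    funext j
    have h1 := hxp j.1 (Finset.mem_range.mpr j.2)
    have h2 := hxq j.1 (Finset.mem_range.mpr j.2)
    rw [hagree p j.1 j.2] at h1
    rw [hagree q j.1 j.2] at h2
    rw [← h1, ← h2]
  have hmeas : μ V = ∑ p ∈ A, μ (cyl (Finset.range n) (ext n p)) := by
    rw [hdecomp]
    exact measure_biUnion_finset hdisj fun p _ => measurableSet_cyl _ _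
  have hval : ∀ p ∈ A, μ (cyl (Finset.range n) (ext n p)) =
      ENNReal.ofReal (r ^ ones p * (1-r) ^ (n - ones p)) := by
    intro p _
    rw [cyl_eq hμ, w]
    congr 1
    exact w_ext r n p
  refine ⟨fun i => (A.filter fun p => ones p = i).card, fun i => ?_, ?_⟩
  · calc (A.filter fun p => ones p = i).card
        ≤ (Finset.univ.filter fun p : Fin n → Bool => ones p = i).card := by
          apply Finset.card_le_card
          intro p hp
          simp only [Finset.mem_filter] at hp ⊢
          exact ⟨Finset.mem_univ _, hp.2⟩
      _ = n.choose i := card_ones_eq n i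
  · rw [hmeas, Finset.sum_congr rfl hval,
      ← ENNReal.ofReal_sum_of_nonneg (fun p _ =>
        mul_nonneg (pow_nonneg hr.1 _) (pow_nonneg (by linarith [hr.2]) _))]
    congr 1
    rw [← Finset.sum_fiberwise_of_maps_to (g := fun p => ones p)
      (fun p _ => Finset.mem_range.mpr (Nat.lt_succ_of_le (ones_le p)))]
    refine Finset.sum_congr rfl fun i _ => ?_
    have hcongr : ∀ p ∈ A.filter (fun p => ones p = i),
        r ^ ones p * (1-r) ^ (n - ones p) = r ^ i * (1-r) ^ (n-i) := by
      intro p hp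
      simp only [Finset.mem_filter] at hp
      rw [hp.2]
    rw [Finset.sum_congr rfl hcongr, Finset.sum_const, nsmul_eq_mul]


lemma aeval_partition (r : ℝ) (n : ℕ) (a : ℕ → ℤ) :
    (aeval r) (∑ i ∈ Finset.range (n+1), C (a i) * X^i * (1-X)^(n-i)) =
      ∑ i ∈ Finset.range (n+1), (a i : ℝ) * (r^i * (1-r)^(n-i)) := by
  rw [map_sum]
  refine Finset.sum_congr rfl fun i _ => ?_
  simp [mul_assoc]

lemma cyl_zero_eq : cyl {0} (fun _ => true) = (fun x : Ω => x 0) ⁻¹' {true} := by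
  ext x; simp [cyl]

lemma forward {r s : ℝ} (hr : r ∈ Set.Icc (0:ℝ) 1) (hs : s ∈ Set.Icc (0:ℝ) 1)
    {μ ν : Measure Ω} (hμ : IsBernoulli r μ) (hν : IsBernoulli s ν)
    {f : Ω → Ω} (hf : Continuous f) (hmap : ν = μ.map f) :
    ∃ P : Polynomial ℤ, IsPartitionPolynomial P ∧ aeval r P = s := by
  have hcl : IsClopen (cyl {0} (fun _ => true)) := by
    rw [cyl_zero_eq]
    exact (isClopen_discrete _).preimage (continuous_apply 0)
  set V := f ⁻¹' cyl {0} (fun _ => true) with hV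
  have hVc : IsClopen V := hcl.preimage hf
  have hVm : MeasurableSet V := hf.measurable (measurableSet_cyl _ _)
  obtain ⟨n, hd⟩ := exists_determined hVc
  obtain ⟨a, ha, hval⟩ := measure_determined hr hμ hVm hd
  have hν0 : ν (cyl {0} fun _ => true) = ENNReal.ofReal s := by
    rw [cyl_eq hν, w]
    norm_num
  have hμV : μ V = ENNReal.ofReal s := by
    rw [← hν0, hmap, Measure.map_apply hf.measurable (measurableSet_cyl _ _)]
  have h1r : (0:ℝ) ≤ 1 - r := by linarith [hr.2]
  have hsnn : ∀ i ∈ Finset.range (n+1), (0:ℝ) ≤ (a i : ℝ) * (r^i * (1-r)^(n-i)) :=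
    fun i _ => mul_nonneg (Nat.cast_nonneg _) (mul_nonneg (pow_nonneg hr.1 _) (pow_nonneg h1r _))
  have hsum : s = ∑ i ∈ Finset.range (n+1), (a i : ℝ) * (r^i * (1-r)^(n-i)) := by
    have := hμV.symm.trans hval
    rwa [ENNReal.ofReal_eq_ofReal_iff hs.1 (Finset.sum_nonneg hsnn)] at this
  refine ⟨∑ i ∈ Finset.range (n+1), C ((a i : ℤ)) * X^i * (1-X)^(n-i),
    ⟨n, fun i => (a i : ℤ), fun i _ => ⟨Int.natCast_nonneg _, by simp only []; exact_mod_cast ha i⟩, rfl⟩, ?_⟩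
  rw [aeval_partition, hsum]
  push_cast
  rfl







def blockSet (n k : ℕ) : Finset ℕ := (Finset.range n).image fun j => n*k + j
def blk (n k : ℕ) (x : Ω) : Fin n → Bool := fun j => x (n*k + j)
noncomputable def patch (n k : ℕ) (p : Fin n → Bool) (e : ℕ → Bool) : ℕ → Bool :=
  fun i => if h : n*k ≤ i ∧ i - n*k < n then p ⟨i - n*k, h.2⟩ else e i
noncomputable def wt (r : ℝ) (n : ℕ) (p : Fin n → Bool) : ℝ := r ^ ones p * (1-r) ^ (n - ones p)

lemma mem_blockSet_iff {n k i : ℕ} : i ∈ blockSet n k ↔ n*k ≤ i ∧ i - n*k < n := by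
  simp only [blockSet, Finset.mem_image, Finset.mem_range]
  constructor
  · rintro ⟨j, hj, rfl⟩; omega
  · rintro ⟨h1, h2⟩; exact ⟨i - n*k, h2, by omega⟩

lemma patch_block (n k : ℕ) (p : Fin n → Bool) (e : ℕ → Bool) (j : Fin n) :
    patch n k p e (n*k + j) = p j := by
  have h : n*k ≤ n*k + (j:ℕ) ∧ (n*k + (j:ℕ)) - n*k < n := ⟨by omega, by have := j.2; omega⟩
  rw [patch, dif_pos h]
  congr 1
  ext
  simp

lemma patch_eq_self {n k i : ℕ} (h : i ∉ blockSet n k) (p : Fin n → Bool) (e : ℕ → Bool) :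
    patch n k p e i = e i := by
  rw [patch, dif_neg]
  rw [mem_blockSet_iff] at h
  exact h

lemma blockSet_card (n k : ℕ) : (blockSet n k).card = n := by
  rw [blockSet, Finset.card_image_of_injective _ (fun a b h => by omega), Finset.card_range]

lemma blockSet_disjoint {n : ℕ} {k k' : ℕ} (h : k ≠ k') :
    Disjoint (blockSet n k) (blockSet n k') := by
  rw [Finset.disjoint_left]
  intro i hi hi'
  rw [mem_blockSet_iff] at hi hi'
  rcases h.lt_or_gt with hlt | hlt
  · have h1 : n*(k+1) ≤ n*k' := Nat.mul_le_mul_left n hlt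
    have h2 : n*(k+1) = n*k + n := by ring
    omega
  · have h1 : n*(k'+1) ≤ n*k := Nat.mul_le_mul_left n hlt
    have h2 : n*(k'+1) = n*k' + n := by ring
    omega

lemma blk_eq_iff {n k : ℕ} {x : Ω} {p : Fin n → Bool} (e : ℕ → Bool) :
    (∀ i ∈ blockSet n k, x i = patch n k p e i) ↔ blk n k x = p := by
  constructor
  · intro h
    funext j
    have hj : n*k + (j:ℕ) ∈ blockSet n k := by rw [mem_blockSet_iff]; have := j.2; omega
    rw [blk, h _ hj, patch_block]
  · intro h i hi
    rw [mem_blockSet_iff] at hi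
    have : i = n*k + ((⟨i - n*k, hi.2⟩ : Fin n) : ℕ) := by simp; omega
    rw [this, patch_block, ← h]
    rfl


lemma w_patch (r : ℝ) {n : ℕ} (k : ℕ) (p : Fin n → Bool) (e : ℕ → Bool) :
    w r (blockSet n k) (patch n k p e) = wt r n p := by
  have himg : ∀ b : Bool, ((blockSet n k).filter fun i => patch n k p e i = b) =
      ((Finset.range n).filter fun j => ext n p j = b).image fun j => n*k + j := by
    intro b
    rw [blockSet, Finset.filter_image]
    congr 1
    apply Finset.filter_congr
    intro j hj
    rw [Finset.mem_range] at hj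
    have h1 : patch n k p e (n*k + j) = p ⟨j, hj⟩ := by
      have := patch_block n k p e ⟨j, hj⟩
      simpa using this
    have h2 : ext n p j = p ⟨j, hj⟩ := by simp [ext, hj]
    rw [h1, h2]
  have hinj : Function.Injective fun j => n*k + j := fun a b h => by
    have : n*k + a = n*k + b := h
    omega
  have hcards : ∀ b : Bool, ((blockSet n k).filter fun i => patch n k p e i = b).card =
      ((Finset.range n).filter fun j => ext n p j = b).card := by
    intro b; rw [himg b, Finset.card_image_of_injective _ hinj]
  rw [w, hcards true, hcards false, wt]
  exact w_ext r n p

lemma measurableSet_blockPre {n : ℕ} (hn : 0 < n) (k : ℕ) (B : Finset (Fin n → Bool)) :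
    MeasurableSet {x : Ω | blk n k x ∈ B} := by
  have : {x : Ω | blk n k x ∈ B} = ⋃ p ∈ B, cyl (blockSet n k) (patch n k p (fun _ => false)) := by
    ext x
    simp only [Set.mem_setOf_eq, Set.mem_iUnion, cyl]
    constructor
    · intro hx
      exact ⟨blk n k x, hx, fun i hi => ((blk_eq_iff (fun _ => false)).mpr rfl) i hi⟩
    · rintro ⟨p, hp, hx⟩
      rw [(blk_eq_iff (fun _ => false)).mp hx]
      exact hp
  rw [this]
  exact MeasurableSet.biUnion B.countable_toSet fun p _ => measurableSet_cyl _ _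

lemma measurableSet_S {n : ℕ} (hn : 0 < n) (t : Finset ℕ) (B : ℕ → Finset (Fin n → Bool)) :
    MeasurableSet {x : Ω | ∀ k ∈ t, blk n k x ∈ B k} := by
  have : {x : Ω | ∀ k ∈ t, blk n k x ∈ B k} = ⋂ k ∈ t, {x : Ω | blk n k x ∈ B k} := by
    ext x; simp
  rw [this]
  exact MeasurableSet.biInter t.countable_toSet fun k _ => measurableSet_blockPre hn k (B k)


lemma wt_nonneg {r : ℝ} (hr : r ∈ Set.Icc (0:ℝ) 1) {n : ℕ} (p : Fin n → Bool) : 0 ≤ wt r n p :=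
  mul_nonneg (pow_nonneg hr.1 _) (pow_nonneg (by linarith [hr.2]) _)

lemma w_congr (r : ℝ) {u : Finset ℕ} {e f : ℕ → Bool} (h : ∀ i ∈ u, e i = f i) :
    w r u e = w r u f := by
  have h1 : (u.filter fun i => e i = true) = u.filter fun i => f i = true :=
    Finset.filter_congr fun i hi => by rw [h i hi]
  have h2 : (u.filter fun i => e i = false) = u.filter fun i => f i = false :=
    Finset.filter_congr fun i hi => by rw [h i hi]
  unfold w
  rw [h1, h2]

lemma key {r : ℝ} (hr : r ∈ Set.Icc (0:ℝ) 1) {μ : Measure Ω} (hμ : IsBernoulli r μ)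
    {n : ℕ} (hn : 0 < n) (B : ℕ → Finset (Fin n → Bool)) (t : Finset ℕ) :
    ∀ u : Finset ℕ, Disjoint u (t.biUnion (blockSet n)) → ∀ e : ℕ → Bool,
    μ (cyl u e ∩ {x | ∀ k ∈ t, blk n k x ∈ B k}) =
      ENNReal.ofReal (w r u e * ∏ k ∈ t, ∑ p ∈ B k, wt r n p) := by
  classical
  induction t using Finset.induction_on with
  | empty =>
      intro u _ e
      simp only [Finset.notMem_empty, false_implies, implies_true, Set.setOf_true,
        Set.inter_univ, Finset.prod_empty, mul_one]
      exact cyl_eq hμ u e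
  | @insert k t hk ih =>
      intro u hdisj e
      have hsub1 : blockSet n k ⊆ (insert k t).biUnion (blockSet n) := fun i hi =>
        Finset.mem_biUnion.mpr ⟨k, Finset.mem_insert_self _ _, hi⟩
      have hsub2 : t.biUnion (blockSet n) ⊆ (insert k t).biUnion (blockSet n) :=
        Finset.biUnion_subset_biUnion_of_subset_left _ (Finset.subset_insert _ _)
      have hub : Disjoint u (blockSet n k) := hdisj.mono_right hsub1
      have hut : Disjoint u (t.biUnion (blockSet n)) := hdisj.mono_right hsub2
      have hbt : Disjoint (blockSet n k) (t.biUnion (blockSet n)) := by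
        rw [Finset.disjoint_biUnion_right]
        intro m hm
        exact blockSet_disjoint (fun h => hk (h ▸ hm))
      have hsplit : cyl u e ∩ {x : Ω | ∀ m ∈ insert k t, blk n m x ∈ B m}
          = ⋃ p ∈ B k, (cyl (u ∪ blockSet n k) (patch n k p e) ∩
              {x : Ω | ∀ m ∈ t, blk n m x ∈ B m}) := by
        ext x
        simp only [Set.mem_inter_iff, Set.mem_setOf_eq, Set.mem_iUnion, exists_prop]
        constructor
        · rintro ⟨hcu, hall⟩
          refine ⟨blk n k x, hall k (Finset.mem_insert_self _ _), ⟨?_,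
            fun m hm => hall m (Finset.mem_insert_of_mem hm)⟩⟩
          intro i hi
          rcases Finset.mem_union.mp hi with hiu | hib
          · rw [patch_eq_self (Finset.disjoint_left.mp hub hiu) _ e]
            exact hcu i hiu
          · exact (blk_eq_iff e).mpr rfl i hib
        · rintro ⟨p, hp, ⟨hcyl, ht⟩⟩
          have hblk : blk n k x = p :=
            (blk_eq_iff e).mp fun i hi => hcyl i (Finset.mem_union_right u hi)
          refine ⟨fun i hi => ?_, fun m hm => ?_⟩
          · rw [← patch_eq_self (Finset.disjoint_left.mp hub hi) p e]
            exact hcyl i (Finset.mem_union_left _ hi)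
          · rcases Finset.mem_insert.mp hm with rfl | hm
            · rw [hblk]; exact hp
            · exact ht m hm
      have hdisjU : (↑(B k) : Set (Fin n → Bool)).PairwiseDisjoint fun p =>
          cyl (u ∪ blockSet n k) (patch n k p e) ∩ {x : Ω | ∀ m ∈ t, blk n m x ∈ B m} := by
        intro p _ q _ hpq
        refine Set.disjoint_left.mpr fun x hxp hxq => hpq ?_
        have h1 : blk n k x = p :=
          (blk_eq_iff e).mp fun i hi => hxp.1 i (Finset.mem_union_right u hi)
        have h2 : blk n k x = q :=
          (blk_eq_iff e).mp fun i hi => hxq.1 i (Finset.mem_union_right u hi)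
        rw [← h1, h2]
      rw [hsplit, measure_biUnion_finset hdisjU
        (fun p _ => (measurableSet_cyl _ _).inter (measurableSet_S hn t B))]
      have hstep : ∀ p ∈ B k,
          μ (cyl (u ∪ blockSet n k) (patch n k p e) ∩ {x : Ω | ∀ m ∈ t, blk n m x ∈ B m})
          = ENNReal.ofReal ((w r u e * wt r n p) * ∏ m ∈ t, ∑ q ∈ B m, wt r n q) := by
        intro p _
        rw [ih (u ∪ blockSet n k) (Finset.disjoint_union_left.mpr ⟨hut, hbt⟩) (patch n k p e)]
        congr 2
        rw [w_union hub (patch n k p e), w_patch]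
        congr 1
        exact w_congr r fun i hi => patch_eq_self (Finset.disjoint_left.mp hub hi) p e
      rw [Finset.sum_congr rfl hstep, ← ENNReal.ofReal_sum_of_nonneg (fun p _ =>
        mul_nonneg (mul_nonneg (w_nonneg hr u e) (wt_nonneg hr p))
          (Finset.prod_nonneg fun m _ => Finset.sum_nonneg fun q _ => wt_nonneg hr q))]
      congr 1
      rw [Finset.prod_insert hk, ← Finset.sum_mul, ← Finset.mul_sum]
      ring


lemma bernoulli_unique {s : ℝ} {ν ν' : Measure Ω} (h : IsBernoulli s ν)
    (h' : IsBernoulli s ν') : ν = ν' := by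
  haveI : IsProbabilityMeasure ν := isProb h
  refine unique (fun t e => by rw [cyl_eq h, cyl_eq h']) ?_
  haveI : IsProbabilityMeasure ν' := isProb h'
  haveI : IsProbabilityMeasure ν := isProb h
  simp

lemma sum_wt_fiber (r : ℝ) (n : ℕ) (A : Finset (Fin n → Bool)) :
    ∑ p ∈ A, wt r n p =
      ∑ i ∈ Finset.range (n+1), ((A.filter fun p => ones p = i).card : ℝ) * (r^i*(1-r)^(n-i)) := by
  classical
  rw [← Finset.sum_fiberwise_of_maps_to (g := fun p => ones p)
    (fun p _ => Finset.mem_range.mpr (Nat.lt_succ_of_le (ones_le p)))]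
  refine Finset.sum_congr rfl fun i _ => ?_
  have hcongr : ∀ p ∈ A.filter (fun p => ones p = i), wt r n p = r ^ i * (1-r) ^ (n-i) := by
    intro p hp
    simp only [Finset.mem_filter] at hp
    rw [wt, hp.2]
  rw [Finset.sum_congr rfl hcongr, Finset.sum_const, nsmul_eq_mul]

lemma sum_wt_univ (r : ℝ) (n : ℕ) : ∑ p : Fin n → Bool, wt r n p = 1 := by
  rw [sum_wt_fiber]
  have h := add_pow r (1-r) n
  simp only [add_sub_cancel, one_pow] at h
  have h2 : ∑ i ∈ Finset.range (n+1),
      ((Finset.univ.filter fun p : Fin n → Bool => ones p = i).card : ℝ) * (r^i*(1-r)^(n-i)) =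
      ∑ m ∈ Finset.range (n+1), r ^ m * (1 - r) ^ (n - m) * (n.choose m : ℝ) := by
    refine Finset.sum_congr rfl fun i _ => ?_
    rw [card_ones_eq]
    ring
  rw [h2, ← h]

lemma backward {r s : ℝ} (hr : r ∈ Set.Icc (0:ℝ) 1) {μ ν : Measure Ω}
    (hμ : IsBernoulli r μ) (hν : IsBernoulli s ν)
    {n : ℕ} (hn : 0 < n) (b : ℕ → ℕ) (hb : ∀ i ≤ n, b i ≤ n.choose i)
    (hsum : s = ∑ i ∈ Finset.range (n+1), (b i : ℝ) * (r^i * (1-r)^(n-i))) :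
    ∃ f : Ω → Ω, Continuous f ∧ ν = μ.map f := by
  classical
  have hbc : ∀ i, (if i ≤ n then b i else 0) ≤
      (Finset.univ.filter fun p : Fin n → Bool => ones p = i).card := by
    intro i
    rw [card_ones_eq]
    split
    · exact hb i ‹_›
    · exact Nat.zero_le _
  choose A hA1 hA2 using fun i =>
    Finset.exists_subset_card_eq (s := Finset.univ.filter fun p : Fin n → Bool => ones p = i)
      (hbc i)
  set AA : Finset (Fin n → Bool) := (Finset.range (n+1)).biUnion A with hAA
  have hones : ∀ i, ∀ p ∈ A i, ones p = i := by
    intro i p hp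
    have := hA1 i hp
    simp only [Finset.mem_filter] at this
    exact this.2
  have hfiber : ∀ i ∈ Finset.range (n+1), AA.filter (fun p => ones p = i) = A i := by
    intro i hi
    ext p
    simp only [Finset.mem_filter, hAA, Finset.mem_biUnion]
    constructor
    · rintro ⟨⟨j, hj, hpj⟩, hpo⟩
      have hj2 := hones j p hpj
      have hji : j = i := by omega
      rwa [hji] at hpj
    · intro hp
      exact ⟨⟨i, hi, hp⟩, hones i p hp⟩
  have hsA : ∑ p ∈ AA, wt r n p = s := by
    rw [sum_wt_fiber, hsum]
    refine Finset.sum_congr rfl fun i hi => ?_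
    rw [hfiber i hi, hA2 i, if_pos (by rw [Finset.mem_range] at hi; omega)]
  have hsC : ∑ p ∈ AAᶜ, wt r n p = 1 - s := by
    have h := Finset.sum_add_sum_compl AA (wt r n)
    rw [sum_wt_univ r n, hsA] at h
    linarith
  set f : Ω → Ω := fun x k => decide (blk n k x ∈ AA) with hf
  have hfc : Continuous f := by
    refine continuous_pi fun k => ?_
    have h1 : Continuous fun x : Ω => blk n k x := continuous_pi fun j => continuous_apply _
    exact (continuous_of_discreteTopology (f := fun q : Fin n → Bool => decide (q ∈ AA))).comp h1
  have hmap : IsBernoulli s (μ.map f) := by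
    intro t e
    have : (μ.map f) {x : Ω | ∀ i ∈ t, x i = e i} = μ (f ⁻¹' cyl t e) :=
      Measure.map_apply hfc.measurable (measurableSet_cyl t e)
    rw [this]
    set B : ℕ → Finset (Fin n → Bool) := fun k => if e k = true then AA else AAᶜ with hB
    have hpre : f ⁻¹' cyl t e = {x : Ω | ∀ k ∈ t, blk n k x ∈ B k} := by
      ext x
      simp only [Set.mem_preimage, cyl, Set.mem_setOf_eq, hf]
      refine forall₂_congr fun k _ => ?_
      rw [hB]
      cases hek : e k <;> simp [Finset.mem_compl, decide_eq_false_iff_not, hek]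
    have hkey := key hr hμ hn B t ∅ (Finset.disjoint_empty_left _) e
    have hcylempty : cyl ∅ e = Set.univ := by
      ext x; simp [cyl]
    rw [hcylempty, Set.univ_inter] at hkey
    rw [hpre, hkey]
    have hw : w r ∅ e = 1 := by simp [w]
    have hBk : ∀ k ∈ t, (∑ p ∈ B k, wt r n p) = (if e k = true then s else 1-s) := by
      intro k _
      rw [hB]
      cases hek : e k <;> simp [hsA, hsC, hek]
    rw [hw, one_mul, Finset.prod_congr rfl hBk, Finset.prod_ite, Finset.prod_const,
      Finset.prod_const]
    congr 2
    apply congrArg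
    apply congrArg
    apply Finset.filter_congr
    intro k _
    simp
  exact ⟨f, hfc, bernoulli_unique hν hmap⟩

end CIBR

/-- For `r, s ∈ [0,1]`, `μ_s` is a continuous image of `μ_r`
iff `s` is binomially reducible to `r`. -/
theorem continuous_image_iff_binomially_reducible
    (r s : ℝ) (hr : r ∈ Set.Icc (0 : ℝ) 1) (hs : s ∈ Set.Icc (0 : ℝ) 1)
    (μ ν : Measure (ℕ → Bool)) (hμ : IsBernoulli r μ) (hν : IsBernoulli s ν) :
    (∃ f : (ℕ → Bool) → (ℕ → Bool), Continuous f ∧ ν = μ.map f) ↔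
      ∃ P : Polynomial ℤ, IsPartitionPolynomial P ∧ aeval r P = s := by
  constructor
  · rintro ⟨f, hf, hmap⟩
    exact CIBR.forward hr hs hμ hν hf hmap
  · rintro ⟨P, ⟨n, a, ha, rfl⟩, haeval⟩
    rw [CIBR.aeval_partition] at haeval
    set b : ℕ → ℕ := fun i => (a i).toNat with hbdef
    have hcast : ∀ i ∈ Finset.range (n+1),
        ((b i : ℝ)) * (r^i*(1-r)^(n-i)) = (a i : ℝ) * (r^i*(1-r)^(n-i)) := by
      intro i hi
      rw [Finset.mem_range] at hi
      have h1 := (ha i (by omega)).1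
      rw [hbdef]
      congr 1
      exact_mod_cast Int.toNat_of_nonneg h1
    have hsum : s = ∑ i ∈ Finset.range (n+1), (b i : ℝ) * (r^i * (1-r)^(n-i)) := by
      rw [Finset.sum_congr rfl hcast]
      exact haeval.symm
    have hb : ∀ i ≤ n, b i ≤ n.choose i := by
      intro i hi
      exact Int.toNat_le.mpr (ha i hi).2
    rcases Nat.eq_zero_or_pos n with rfl | hn
    · have hsum0 : s = (b 0 : ℝ) := by simpa using hsum
      have hb0 : b 0 ≤ 1 := by simpa using hb 0 le_rfl
      refine CIBR.backward hr hμ hν (n := 1) one_pos (fun _ => b 0) ?_ ?_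
      · intro i hi
        interval_cases i <;> simpa using hb0
      · rw [hsum0]
        rw [Finset.sum_range_succ, Finset.sum_range_succ, Finset.sum_range_zero]
        norm_num
        ring
    · exact CIBR.backward hr hμ hν hn b hb hsum
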